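/- 2·arccosh(1 + √2) / arccosh((5 + 4√2)/3) < 8/5. -/
import Mathlib


open Real

noncomputable def arccosh (x : ℝ) : ℝ := Real.log (x + Real.sqrt (x ^ 2 - 1))

theorem genus_two_ratio_lt :
    2 * arccosh (1 + Real.sqrt 2) / arccosh ((5 + 4 * Real.sqrt 2) / 3) < 8 / 5 := by
  have hs2 : Real.sqrt 2 ^ 2 = 2 := Real.sq_sqrt (by norm_num)
  have hslb : (1.4142135 : ℝ) < Real.sqrt 2 := by
    nlinarith [Real.sqrt_nonneg 2, hs2]
  have hsub : Real.sqrt 2 < (1.4142136 : ℝ) := by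
    nlinarith [Real.sqrt_nonneg 2, hs2]
  set u : ℝ := 1 + Real.sqrt 2 + Real.sqrt ((1 + Real.sqrt 2) ^ 2 - 1) with hu_def
  set v : ℝ := (5 + 4 * Real.sqrt 2) / 3 + Real.sqrt (((5 + 4 * Real.sqrt 2) / 3) ^ 2 - 1) with hv_def
  -- bounds on the inner square roots
  have ha_nonneg : 0 ≤ Real.sqrt ((1 + Real.sqrt 2) ^ 2 - 1) := Real.sqrt_nonneg _
  have ha_ub : Real.sqrt ((1 + Real.sqrt 2) ^ 2 - 1) < 2.1973683 := by
    rw [show ((1 + Real.sqrt 2) ^ 2 - 1 : ℝ) = 2 + 2 * Real.sqrt 2 by nlinarith]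
    rw [Real.sqrt_lt' (by norm_num)]
    nlinarith
  have hb_lb : (3.4 : ℝ) < Real.sqrt (((5 + 4 * Real.sqrt 2) / 3) ^ 2 - 1) := by
    rw [Real.lt_sqrt (by norm_num)]
    nlinarith
  have hu1 : 1 < u := by
    rw [hu_def]; nlinarith
  have hu_ub : u < 4.6115820 := by
    rw [hu_def]; nlinarith
  have hv_lb : (6.95 : ℝ) < v := by
    rw [hv_def]; nlinarith
  have hv1 : (1 : ℝ) < v := lt_trans (by norm_num) hv_lb
  -- key log inequality : 5 * log u < 4 * log v
  have hkey : 5 * Real.log u < 4 * Real.log v := by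
    have h1 : Real.log u < Real.log 4.6115820 := Real.log_lt_log (by linarith) hu_ub
    have h2 : Real.log 6.95 < Real.log v := Real.log_lt_log (by norm_num) hv_lb
    have h3 : (5 : ℝ) * Real.log 4.6115820 < 4 * Real.log 6.95 := by
      have e1 : (5 : ℝ) * Real.log 4.6115820 = Real.log (4.6115820 ^ (5 : ℕ)) := by
        rw [Real.log_pow]; norm_num
      have e2 : (4 : ℝ) * Real.log 6.95 = Real.log ((6.95 : ℝ) ^ (4 : ℕ)) := by
        rw [Real.log_pow]; norm_num
      rw [e1, e2]
      apply Real.log_lt_log (by positivity)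
      norm_num
    linarith
  have hlogv : 0 < Real.log v := Real.log_pos hv1
  unfold arccosh
  rw [div_lt_iff₀ hlogv]
  linarith
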